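/- arXiv:2009.00882 — 2 statements merged into one kernel-verified Lean document; each statement's English description precedes it below -/
import Mathlib

section
/- Let q > 0 be a real number and let x be a real number with x > 2√q. Then ∑_{n₁=0}^∞ ∑_{n₂=0}^∞ q^{n₁+n₂+1}·(2n₁+1)!·(2n₂+1)! / ((n₁+n₂+1)·(n₁!)²·(n₂!)²) · x^{−2n₁−2n₂−4} + ∑_{n₁=1}^∞ ∑_{n₂=1}^∞ q^{n₁+n₂}·n₁·n₂·(2n₁)!·(2n₂)! / ((n₁+n₂)·(n₁!)²·(n₂!)²) · x^{−2n₁−2n₂−2} = q/(x²−4q)². (This is the diagonal value W₀₂(x,x;q) of the genus-zero two-point function.) -/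
/-- The even part of the diagonal genus-zero two-point series. -/
noncomputable def evenDiagTerm (q x : ℝ) (p : ℕ × ℕ) : ℝ :=
  q ^ (p.1 + p.2 + 1) * (Nat.factorial (2 * p.1 + 1) : ℝ) * (Nat.factorial (2 * p.2 + 1) : ℝ) /
    (((p.1 + p.2 + 1 : ℕ) : ℝ) * ((Nat.factorial p.1 : ℝ)) ^ 2 * ((Nat.factorial p.2 : ℝ)) ^ 2) *
    x ^ (-(2 * (p.1 : ℤ) + 2 * (p.2 : ℤ) + 4))

/-- The odd part of the diagonal genus-zero two-point series; the summation over
`n₁, n₂ ≥ 1` is written by reindexing `nᵢ = pᵢ + 1` over `(p₁, p₂) ∈ ℕ × ℕ`. -/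
noncomputable def oddDiagTerm (q x : ℝ) (p : ℕ × ℕ) : ℝ :=
  q ^ ((p.1 + 1) + (p.2 + 1)) * ((p.1 + 1 : ℕ) : ℝ) * ((p.2 + 1 : ℕ) : ℝ) *
      (Nat.factorial (2 * (p.1 + 1)) : ℝ) * (Nat.factorial (2 * (p.2 + 1)) : ℝ) /
    ((((p.1 + 1) + (p.2 + 1) : ℕ) : ℝ) * ((Nat.factorial (p.1 + 1) : ℝ)) ^ 2 *
      ((Nat.factorial (p.2 + 1) : ℝ)) ^ 2) *
    x ^ (-(2 * ((p.1 : ℤ) + 1) + 2 * ((p.2 : ℤ) + 1) + 2))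


open Finset

noncomputable def cb (n : ℕ) : ℝ := (Nat.centralBinom n : ℝ)
noncomputable def eb (n : ℕ) : ℝ := (2 * n + 1) * cb n

lemma cb_zero : cb 0 = 1 := by simp [cb, Nat.centralBinom]

lemma eb_zero : eb 0 = 1 := by simp [eb, cb_zero]

lemma cb_rec (n : ℕ) : ((n : ℝ) + 1) * cb (n + 1) = 2 * (2 * n + 1) * cb n := by
  have := Nat.succ_mul_centralBinom_succ n
  have h : (((n + 1) * Nat.centralBinom (n + 1) : ℕ) : ℝ)
      = ((2 * (2 * n + 1) * Nat.centralBinom n : ℕ) : ℝ) := by rw [this]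
  push_cast at h
  simpa [cb] using h

lemma eb_rec (n : ℕ) : eb (n + 1) = 4 * eb n + cb (n + 1) := by
  have h := cb_rec n
  simp only [eb]
  push_cast
  nlinarith [h]

lemma fact_two_mul (n : ℕ) : ((2 * n).factorial : ℝ) = cb n * ((n.factorial : ℝ)) ^ 2 := by
  have h : Nat.centralBinom n * n.factorial * n.factorial = (2 * n).factorial := by
    have := Nat.choose_mul_factorial_mul_factorial (show n ≤ 2 * n by omega)
    simpa [Nat.centralBinom, two_mul, Nat.add_sub_cancel] using this
  have := congrArg (fun k : ℕ => (k : ℝ)) h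
  push_cast at this
  rw [← this, cb]; ring

noncomputable def Scb (m : ℕ) : ℝ := ∑ i ∈ range (m + 1), cb i * cb (m - i)

lemma sum_reflect' (f : ℕ → ℕ → ℝ) (m : ℕ) :
    ∑ i ∈ range (m + 1), f i (m - i) = ∑ i ∈ range (m + 1), f (m - i) i := by
  rw [← Finset.sum_range_reflect (fun i => f (m - i) i) (m + 1)]
  refine Finset.sum_congr rfl fun i hi => ?_
  have hi' : i ≤ m := by simpa [Nat.lt_succ_iff] using hi
  simp [Nat.sub_sub_self hi']

lemma sym_eb_sum (m : ℕ) :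
    ∑ i ∈ range (m + 1), (2 * (i : ℝ) + 1) * (cb i * cb (m - i)) = ((m : ℝ) + 1) * Scb m := by
  have hr := sum_reflect' (fun i j => (2 * (i : ℝ) + 1) * (cb i * cb j)) m
  have key : (∑ i ∈ range (m + 1), (2 * (i : ℝ) + 1) * (cb i * cb (m - i)))
      + ∑ i ∈ range (m + 1), (2 * ((m - i : ℕ) : ℝ) + 1) * (cb (m - i) * cb i)
      = (2 * (m : ℝ) + 2) * Scb m := by
    rw [← Finset.sum_add_distrib, Scb, Finset.mul_sum]
    refine Finset.sum_congr rfl fun i hi => ?_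
    have hi' : i ≤ m := by simpa [Nat.lt_succ_iff] using hi
    have : ((m - i : ℕ) : ℝ) = (m : ℝ) - i := by push_cast [Nat.cast_sub hi']; ring
    rw [this]; ring
  rw [hr] at key
  linarith [key]

lemma Scb_succ (m : ℕ) : Scb (m + 1) = 4 * Scb m := by
  -- J = ∑_{i ∈ range (m+2)} (m+1-i) * cb i * cb (m+1-i)
  set J : ℝ := ∑ i ∈ range (m + 2), (((m + 1 - i : ℕ) : ℝ)) * (cb i * cb (m + 1 - i)) with hJ
  -- (a) 2 * J = (m+1) * Scb (m+1)
  have ha : 2 * J = ((m : ℝ) + 1) * Scb (m + 1) := by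
    have hr := sum_reflect' (fun i j => ((j : ℕ) : ℝ) * (cb i * cb j)) (m + 1)
    -- hr : ∑ i ∈ range (m+2), (m+1-i) * (cb i * cb (m+1-i)) = ∑ i, i * (cb (m+1-i) * cb i)
    have key : J + ∑ i ∈ range (m + 2), ((i : ℕ) : ℝ) * (cb (m + 1 - i) * cb i)
        = ((m : ℝ) + 1) * Scb (m + 1) := by
      rw [hJ, ← Finset.sum_add_distrib, Scb, Finset.mul_sum]
      refine Finset.sum_congr rfl fun i hi => ?_
      have hi' : i ≤ m + 1 := by simpa [Nat.lt_succ_iff] using hi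
      have : ((m + 1 - i : ℕ) : ℝ) = (m : ℝ) + 1 - i := by push_cast [Nat.cast_sub hi']; ring
      rw [this]; ring
    rw [← hr] at key
    simpa [hJ, two_mul] using key
  -- (b) J = 2 * (m+1) * Scb m
  have hb : J = 2 * ((m : ℝ) + 1) * Scb m := by
    have hlast : J = ∑ i ∈ range (m + 1), (((m + 1 - i : ℕ) : ℝ)) * (cb i * cb (m + 1 - i)) := by
      rw [hJ, Finset.sum_range_succ]
      simp
    rw [hlast]
    have hstep : ∀ i ∈ range (m + 1),
        (((m + 1 - i : ℕ) : ℝ)) * (cb i * cb (m + 1 - i))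
          = 2 * ((2 * ((m - i : ℕ) : ℝ) + 1) * (cb (m - i) * cb i)) := by
      intro i hi
      have hi' : i ≤ m := by simpa [Nat.lt_succ_iff] using hi
      have h1 : m + 1 - i = (m - i) + 1 := by omega
      rw [h1]
      have := cb_rec (m - i)
      push_cast at this ⊢
      linear_combination cb i * this
    rw [Finset.sum_congr rfl hstep, ← Finset.mul_sum]
    have hrefl := sum_reflect' (fun i j => (2 * (i : ℝ) + 1) * (cb i * cb j)) m
    rw [← hrefl, sym_eb_sum m]
    ring
  have hm : ((m : ℝ) + 1) ≠ 0 := by positivity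
  have := ha.symm.trans (by rw [hb] : 2 * J = 2 * (2 * ((m : ℝ) + 1) * Scb m))
  field_simp at this
  nlinarith [this]

lemma Scb_eq (m : ℕ) : Scb m = 4 ^ m := by
  induction m with
  | zero => simp [Scb, cb_zero]
  | succ n ih => rw [Scb_succ, ih]; ring

noncomputable def Wcb (m : ℕ) : ℝ := ∑ i ∈ range (m + 1), eb (m - i) * cb i

lemma Wcb_succ (m : ℕ) : Wcb (m + 1) = 4 * Wcb m + 4 ^ (m + 1) := by
  have h1 : Wcb (m + 1)
      = (∑ i ∈ range (m + 1), eb (m + 1 - i) * cb i) + eb 0 * cb (m + 1) := by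
    rw [Wcb, Finset.sum_range_succ]
    simp
  have h2 : ∀ i ∈ range (m + 1),
      eb (m + 1 - i) * cb i = 4 * (eb (m - i) * cb i) + cb ((m - i) + 1) * cb i := by
    intro i hi
    have hi' : i ≤ m := by simpa [Nat.lt_succ_iff] using hi
    have h : m + 1 - i = (m - i) + 1 := by omega
    rw [h, eb_rec]; ring
  have h3 : ∑ i ∈ range (m + 1), cb ((m - i) + 1) * cb i = Scb (m + 1) - cb (m + 1) := by
    have : Scb (m + 1) = (∑ i ∈ range (m + 1), cb i * cb (m + 1 - i)) + cb (m + 1) * cb 0 := by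
      rw [Scb, Finset.sum_range_succ]; simp
    have h4 : ∑ i ∈ range (m + 1), cb i * cb (m + 1 - i)
        = ∑ i ∈ range (m + 1), cb ((m - i) + 1) * cb i := by
      refine Finset.sum_congr rfl fun i hi => ?_
      have hi' : i ≤ m := by simpa [Nat.lt_succ_iff] using hi
      have h : m + 1 - i = (m - i) + 1 := by omega
      rw [h]; ring
    rw [h4] at this
    rw [this, cb_zero]; ring
  rw [h1, Finset.sum_congr rfl h2, Finset.sum_add_distrib, ← Finset.mul_sum, h3, Scb_eq,
    eb_zero, ← Wcb]
  ring

lemma Wcb_eq (m : ℕ) : Wcb m = ((m : ℝ) + 1) * 4 ^ m := by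
  induction m with
  | zero => simp [Wcb, eb_zero, cb_zero]
  | succ n ih => rw [Wcb_succ, ih]; push_cast; ring

noncomputable def Acb (m : ℕ) : ℝ := ∑ i ∈ range (m + 1), eb i * eb (m - i)

lemma Acb_succ (m : ℕ) : Acb (m + 1) = 4 * Acb m + ((m : ℝ) + 2) * 4 ^ (m + 1) := by
  have h1 : Acb (m + 1)
      = (∑ i ∈ range (m + 1), eb i * eb (m + 1 - i)) + eb (m + 1) * eb 0 := by
    rw [Acb, Finset.sum_range_succ]; simp
  have h2 : ∀ i ∈ range (m + 1),
      eb i * eb (m + 1 - i) = 4 * (eb i * eb (m - i)) + eb i * cb (m + 1 - i) := by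
    intro i hi
    have hi' : i ≤ m := by simpa [Nat.lt_succ_iff] using hi
    have h : m + 1 - i = (m - i) + 1 := by omega
    rw [h, eb_rec]; ring
  have h3 : ∑ i ∈ range (m + 1), eb i * cb (m + 1 - i) = Wcb (m + 1) - eb (m + 1) := by
    have hrefl := sum_reflect' (fun i j => eb j * cb i) (m + 1)
    -- hrefl : ∑ i ∈ range (m+2), eb (m+1-i) * cb i = ∑ i ∈ range (m+2), eb i * cb (m+1-i)
    have : Wcb (m + 1) = ∑ i ∈ range (m + 2), eb i * cb (m + 1 - i) := by
      rw [Wcb, hrefl]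
    rw [this, Finset.sum_range_succ (fun i => eb i * cb (m + 1 - i)) (m + 1)]
    simp [cb_zero]
  rw [h1, Finset.sum_congr rfl h2, Finset.sum_add_distrib, ← Finset.mul_sum, h3, Wcb_eq, ← Acb,
    eb_zero]
  push_cast; ring

lemma Acb_eq (m : ℕ) : 2 * Acb m = ((m : ℝ) + 1) * ((m : ℝ) + 2) * 4 ^ m := by
  induction m with
  | zero => simp [Acb, eb_zero]
  | succ n ih => rw [Acb_succ]; push_cast; push_cast at ih; linear_combination 4 * ih

lemma hasSum_of_antidiagonal {F : ℕ × ℕ → ℝ} (hF : ∀ p, 0 ≤ F p) {g : ℕ → ℝ}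
    (hFg : ∀ n, ∑ p ∈ Finset.HasAntidiagonal.antidiagonal n, F p = g n) {S : ℝ} (hg : HasSum g S) :
    HasSum F S := by
  have hfib : ∀ n : ℕ, HasSum (fun p : (Finset.HasAntidiagonal.antidiagonal n : Finset (ℕ × ℕ)) => F p) (g n) := by
    intro n
    rw [← hFg n, ← Finset.sum_attach (Finset.HasAntidiagonal.antidiagonal n) F]
    exact hasSum_fintype _
  have hsig : Summable (fun x : Σ n : ℕ, (Finset.HasAntidiagonal.antidiagonal n : Finset (ℕ × ℕ)) => F x.2) := by
    rw [summable_sigma_of_nonneg (fun _ => hF _)]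
    refine ⟨fun n => (hfib n).summable, ?_⟩
    have : (fun n : ℕ => ∑' p : (Finset.HasAntidiagonal.antidiagonal n : Finset (ℕ × ℕ)), F p) = g := by
      funext n; exact (hfib n).tsum_eq
    rw [this]
    exact hg.summable
  have hS : HasSum (fun x : Σ n : ℕ, (Finset.HasAntidiagonal.antidiagonal n : Finset (ℕ × ℕ)) => F x.2) S :=
    HasSum.sigma_of_hasSum hg hfib hsig
  exact (Finset.HasAntidiagonal.sigmaAntidiagonalEquivProd.hasSum_iff).mp hS

lemma fact_odd (k : ℕ) : ((2 * k + 1).factorial : ℝ) = eb k * ((k.factorial : ℝ)) ^ 2 := by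
  rw [Nat.factorial_succ]
  push_cast
  rw [fact_two_mul k, eb]
  ring

lemma dfac (k : ℕ) :
    ((k : ℝ) + 1) * ((2 * (k + 1)).factorial : ℝ)
      = 2 * eb k * ((Nat.factorial (k + 1) : ℝ)) ^ 2 := by
  rw [fact_two_mul (k + 1), eb]
  linear_combination ((Nat.factorial (k + 1) : ℝ)) ^ 2 * cb_rec k

lemma even_row (q x : ℝ) (hx0 : 0 < x) (n : ℕ) :
    ∑ p ∈ Finset.HasAntidiagonal.antidiagonal n, evenDiagTerm q x p
      = (q ^ (n + 1) * (x ^ (2 * n + 4))⁻¹ / ((n : ℝ) + 1)) * Acb n := by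
  rw [Finset.Nat.sum_antidiagonal_eq_sum_range_succ_mk, Acb, Finset.mul_sum]
  refine Finset.sum_congr rfl fun k hk => ?_
  have hk' : k ≤ n := by simpa [Nat.lt_succ_iff] using hk
  have hadd : k + (n - k) = n := by omega
  simp only [evenDiagTerm]
  rw [hadd]
  have hz : (-(2 * (k : ℤ) + 2 * ((n - k : ℕ) : ℤ) + 4)) = -((2 * n + 4 : ℕ) : ℤ) := by
    have h1 : ((n - k : ℕ) : ℤ) = (n : ℤ) - k := by omega
    rw [h1]; push_cast; ring
  rw [hz, zpow_neg, zpow_natCast, fact_odd k, fact_odd (n - k)]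
  have h1 : ((n : ℝ) + 1) ≠ 0 := by positivity
  have h2 : ((k.factorial : ℝ)) ≠ 0 := by exact_mod_cast k.factorial_ne_zero
  have h3 : (((n - k).factorial : ℝ)) ≠ 0 := by exact_mod_cast (n - k).factorial_ne_zero
  have h4 : x ≠ 0 := ne_of_gt hx0
  push_cast
  field_simp

lemma odd_row (q x : ℝ) (hx0 : 0 < x) (n : ℕ) :
    ∑ p ∈ Finset.HasAntidiagonal.antidiagonal n, oddDiagTerm q x p
      = (4 * q ^ (n + 2) * (x ^ (2 * n + 6))⁻¹ / ((n : ℝ) + 2)) * Acb n := by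
  rw [Finset.Nat.sum_antidiagonal_eq_sum_range_succ_mk, Acb, Finset.mul_sum]
  refine Finset.sum_congr rfl fun k hk => ?_
  have hk' : k ≤ n := by simpa [Nat.lt_succ_iff] using hk
  have hadd : (k + 1) + ((n - k) + 1) = n + 2 := by omega
  simp only [oddDiagTerm]
  rw [hadd]
  have hz : (-(2 * ((k : ℤ) + 1) + 2 * (((n - k : ℕ) : ℤ) + 1) + 2)) = -((2 * n + 6 : ℕ) : ℤ) := by
    have h1 : ((n - k : ℕ) : ℤ) = (n : ℤ) - k := by omega
    rw [h1]; push_cast; ring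
  rw [hz, zpow_neg, zpow_natCast]
  have h1 : ((n : ℝ) + 2) ≠ 0 := by positivity
  have h2 : ((Nat.factorial (k + 1) : ℝ)) ≠ 0 := by exact_mod_cast (k + 1).factorial_ne_zero
  have h3 : ((Nat.factorial ((n - k) + 1) : ℝ)) ≠ 0 := by
    exact_mod_cast ((n - k) + 1).factorial_ne_zero
  have h4 : x ≠ 0 := ne_of_gt hx0
  have hd1 := dfac k
  have hd2 := dfac (n - k)
  rw [Nat.cast_sub hk'] at hd2
  push_cast at hd1 hd2 ⊢
  rw [Nat.cast_sub hk']
  rw [show q ^ (n + 2) * ((k : ℝ) + 1) * ((n : ℝ) - k + 1) * ((2 * (k + 1)).factorial : ℝ)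
      * ((2 * (n - k + 1)).factorial : ℝ) = q ^ (n + 2) * (((k : ℝ) + 1) * ((2 * (k + 1)).factorial : ℝ))
      * (((n : ℝ) - k + 1) * ((2 * (n - k + 1)).factorial : ℝ)) by ring, hd1, hd2]
  field_simp
  ring


/-- The diagonal value `W₀₂(x,x;q)` of the genus-zero two-point function equals
`q/(x²-4q)²`. -/
theorem two_point_series_diagonal (q x : ℝ) (hq : 0 < q) (hx : 2 * Real.sqrt q < x) :
    Summable (evenDiagTerm q x) ∧ Summable (oddDiagTerm q x) ∧
      (∑' p : ℕ × ℕ, evenDiagTerm q x p) + (∑' p : ℕ × ℕ, oddDiagTerm q x p) =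
        q / (x ^ 2 - 4 * q) ^ 2 := by
  have hsq : 0 < Real.sqrt q := Real.sqrt_pos.mpr hq
  have hx0 : 0 < x := lt_trans (by positivity) hx
  have hx2 : 4 * q < x ^ 2 := by
    have h := pow_lt_pow_left₀ hx (by positivity) two_ne_zero
    calc 4 * q = (2 * Real.sqrt q) ^ 2 := by
          rw [mul_pow, Real.sq_sqrt hq.le]; ring
      _ < x ^ 2 := h
  have hxne : x ≠ 0 := ne_of_gt hx0
  have hx2ne : x ^ 2 - 4 * q ≠ 0 := by nlinarith
  have hr0 : 0 < 4 * q / x ^ 2 := by positivity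
  have hr1 : 4 * q / x ^ 2 < 1 := (div_lt_one (by positivity)).mpr hx2
  have hrne : 1 - 4 * q / x ^ 2 ≠ 0 := by
    have : 4 * q / x ^ 2 < 1 := hr1
    intro h; rw [sub_eq_zero] at h; exact absurd h.symm (ne_of_lt this)
  -- geometric sums
  have hgeom : HasSum (fun n : ℕ => (4 * q / x ^ 2) ^ n) (1 - 4 * q / x ^ 2)⁻¹ :=
    hasSum_geometric_of_lt_one hr0.le hr1
  have hmul : HasSum (fun n : ℕ => (n : ℝ) * (4 * q / x ^ 2) ^ n)
      ((4 * q / x ^ 2) / (1 - 4 * q / x ^ 2) ^ 2) := by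
    apply hasSum_coe_mul_geometric_of_norm_lt_one
    rw [Real.norm_eq_abs, abs_of_pos hr0]; exact hr1
  -- even part
  have hAn : ∀ n : ℕ, Acb n = ((n : ℝ) + 1) * ((n : ℝ) + 2) * 4 ^ n / 2 := by
    intro n; linarith [Acb_eq n]
  have heg : HasSum (fun n : ℕ => (q * (x ^ 4)⁻¹ / 2) * (((n : ℝ) + 2) * (4 * q / x ^ 2) ^ n))
      ((q * (x ^ 4)⁻¹ / 2) * ((4 * q / x ^ 2) / (1 - 4 * q / x ^ 2) ^ 2
        + 2 * (1 - 4 * q / x ^ 2)⁻¹)) := by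
    have h := (hmul.add (hgeom.mul_left 2)).mul_left (q * (x ^ 4)⁻¹ / 2)
    have he : (fun n : ℕ => (q * (x ^ 4)⁻¹ / 2) * (((n : ℝ) + 2) * (4 * q / x ^ 2) ^ n))
        = fun n : ℕ => (q * (x ^ 4)⁻¹ / 2) *
            ((n : ℝ) * (4 * q / x ^ 2) ^ n + 2 * (4 * q / x ^ 2) ^ n) := by
      funext n; ring
    rw [he]; exact h
  have hevrow : ∀ n : ℕ, ∑ p ∈ Finset.HasAntidiagonal.antidiagonal n, evenDiagTerm q x p
      = (q * (x ^ 4)⁻¹ / 2) * (((n : ℝ) + 2) * (4 * q / x ^ 2) ^ n) := by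
    intro n
    rw [even_row q x hx0 n, hAn n]
    have hxp : x ^ (2 * n + 4) = (x ^ 2) ^ n * x ^ 4 := by
      rw [← pow_mul]; ring
    have hn1 : ((n : ℝ) + 1) ≠ 0 := by positivity
    rw [hxp, div_pow]
    field_simp
    ring
  have hevpos : ∀ p : ℕ × ℕ, 0 ≤ evenDiagTerm q x p := by
    intro p
    unfold evenDiagTerm
    positivity
  have hEv : HasSum (evenDiagTerm q x)
      ((q * (x ^ 4)⁻¹ / 2) * ((4 * q / x ^ 2) / (1 - 4 * q / x ^ 2) ^ 2
        + 2 * (1 - 4 * q / x ^ 2)⁻¹)) :=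
    hasSum_of_antidiagonal hevpos hevrow heg
  -- odd part
  have hog : HasSum (fun n : ℕ => (2 * q ^ 2 * (x ^ 6)⁻¹) * (((n : ℝ) + 1) * (4 * q / x ^ 2) ^ n))
      ((2 * q ^ 2 * (x ^ 6)⁻¹) * ((4 * q / x ^ 2) / (1 - 4 * q / x ^ 2) ^ 2
        + (1 - 4 * q / x ^ 2)⁻¹)) := by
    have h := (hmul.add hgeom).mul_left (2 * q ^ 2 * (x ^ 6)⁻¹)
    have he : (fun n : ℕ => (2 * q ^ 2 * (x ^ 6)⁻¹) * (((n : ℝ) + 1) * (4 * q / x ^ 2) ^ n))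
        = fun n : ℕ => (2 * q ^ 2 * (x ^ 6)⁻¹) *
            ((n : ℝ) * (4 * q / x ^ 2) ^ n + (4 * q / x ^ 2) ^ n) := by
      funext n; ring
    rw [he]; exact h
  have hodrow : ∀ n : ℕ, ∑ p ∈ Finset.HasAntidiagonal.antidiagonal n, oddDiagTerm q x p
      = (2 * q ^ 2 * (x ^ 6)⁻¹) * (((n : ℝ) + 1) * (4 * q / x ^ 2) ^ n) := by
    intro n
    rw [odd_row q x hx0 n, hAn n]
    have hxp : x ^ (2 * n + 6) = (x ^ 2) ^ n * x ^ 6 := by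
      rw [← pow_mul]; ring
    have hn2 : ((n : ℝ) + 2) ≠ 0 := by positivity
    rw [hxp, div_pow]
    field_simp
    ring
  have hodpos : ∀ p : ℕ × ℕ, 0 ≤ oddDiagTerm q x p := by
    intro p
    unfold oddDiagTerm
    positivity
  have hOd : HasSum (oddDiagTerm q x)
      ((2 * q ^ 2 * (x ^ 6)⁻¹) * ((4 * q / x ^ 2) / (1 - 4 * q / x ^ 2) ^ 2
        + (1 - 4 * q / x ^ 2)⁻¹)) :=
    hasSum_of_antidiagonal hodpos hodrow hog
  refine ⟨hEv.summable, hOd.summable, ?_⟩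
  rw [hEv.tsum_eq, hOd.tsum_eq]
  have hsub : 1 - 4 * q / x ^ 2 = (x ^ 2 - 4 * q) / x ^ 2 := by field_simp
  rw [hsub]
  field_simp
  ring
end

section
/- Let g ≥ 1 be an integer and let t be a real number with 0 ≤ t < 1/4. Then ∑_{d=0}^∞ ((2g−1+2d)!/(d!)²)·t^d = (2g−1)!·(1−4t)^{−(4g−1)/2} · ∑_{j=0}^{g−1} ((2g−1)!/((2g−1−2j)!·(j!)²))·t^j. -/
open Finset Filter Topology

noncomputable section

namespace OnePointAux

/-- Coefficient of `t^k` in `(1-4t)^{-(2m+1)/2}`. -/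
def bb (m k : ℕ) : ℝ :=
  (Nat.factorial (2 * k + 2 * m) * Nat.factorial m) /
    (Nat.factorial (2 * m) * Nat.factorial (k + m) * Nat.factorial k)

lemma bb_pos (m k : ℕ) : 0 < bb m k := by
  unfold bb
  have h1 := Nat.factorial_pos (2 * k + 2 * m)
  have h2 := Nat.factorial_pos m
  have h3 := Nat.factorial_pos (2 * m)
  have h4 := Nat.factorial_pos (k + m)
  have h5 := Nat.factorial_pos k
  positivity

lemma bb_zero (m : ℕ) : bb m 0 = 1 := by
  unfold bb
  have h3 : (0:ℝ) < Nat.factorial (2 * m) := by exact_mod_cast Nat.factorial_pos (2*m)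
  have h2 : (0:ℝ) < Nat.factorial m := by exact_mod_cast Nat.factorial_pos m
  simp only [Nat.mul_zero, Nat.zero_add, Nat.factorial_zero, Nat.cast_one, mul_one]
  rw [div_self]
  positivity

lemma bb_rec (m k : ℕ) :
    ((k : ℝ) + 1) * bb m (k + 1) = (4 * k + 4 * m + 2) * bb m k := by
  have h1 : 2 * (k+1) + 2*m = (2*k+2*m) + 1 + 1 := by ring
  have h2 : (k+1) + m = (k+m) + 1 := by ring
  unfold bb
  rw [h1, h2, Nat.factorial_succ ((2*k+2*m)+1), Nat.factorial_succ (2*k+2*m),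
    Nat.factorial_succ (k+m), Nat.factorial_succ k]
  have A : (Nat.factorial (2*m) : ℝ) ≠ 0 := by exact_mod_cast (Nat.factorial_pos (2*m)).ne'
  have B : (Nat.factorial (2*k+2*m) : ℝ) ≠ 0 := by
    exact_mod_cast (Nat.factorial_pos (2*k+2*m)).ne'
  have C : (Nat.factorial (k+m) : ℝ) ≠ 0 := by exact_mod_cast (Nat.factorial_pos (k+m)).ne'
  have D : (Nat.factorial k : ℝ) ≠ 0 := by exact_mod_cast (Nat.factorial_pos k).ne'
  have E : ((k:ℝ)+1) ≠ 0 := by positivity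
  have F : ((k:ℝ)+(m:ℝ)+1) ≠ 0 := by positivity
  push_cast
  field_simp
  ring

/-- Coefficients of the polynomial part. -/
def qq (g j : ℕ) : ℝ :=
  ((2*g-1).descFactorial (2*j) : ℝ) / (Nat.factorial j : ℝ)^2

lemma qq_zero (g : ℕ) : qq g 0 = 1 := by simp [qq]

lemma qq_eq_zero {g j : ℕ} (h : g ≤ j) (hg : 1 ≤ g) : qq g j = 0 := by
  unfold qq
  rw [Nat.descFactorial_eq_zero_iff_lt.2 (by omega)]
  simp

lemma qq_rec (g : ℕ) (hg : 1 ≤ g) (j : ℕ) :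
    ((j:ℝ)+1)^2 * qq g (j+1) =
      (2*(g:ℝ) - 1 - 2*j) * (2*(g:ℝ) - 2 - 2*j) * qq g j := by
  rcases le_or_gt (j+1) g with h | h
  · have h1 : 2*j ≤ 2*g-1 := by omega
    have h2 : 2*j+1 ≤ 2*g-1 := by omega
    unfold qq
    rw [show 2*(j+1) = (2*j)+1+1 by ring, Nat.descFactorial_succ, Nat.descFactorial_succ,
      Nat.factorial_succ]
    have c1 : ((2*g-1 - (2*j+1) : ℕ) : ℝ) = 2*(g:ℝ) - 2 - 2*j := by
      have := Nat.cast_sub (R := ℝ) h2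
      rw [this]
      push_cast [Nat.cast_sub (show 1 ≤ 2*g by omega)]
      ring
    have c2 : ((2*g-1 - 2*j : ℕ) : ℝ) = 2*(g:ℝ) - 1 - 2*j := by
      rw [Nat.cast_sub h1]
      push_cast [Nat.cast_sub (show 1 ≤ 2*g by omega)]
      ring
    push_cast [c1, c2]
    have D : (Nat.factorial j : ℝ) ≠ 0 := by exact_mod_cast (Nat.factorial_pos j).ne'
    have E : ((j:ℝ)+1) ≠ 0 := by positivity
    field_simp
  · rw [qq_eq_zero (show g ≤ j+1 by omega) hg, qq_eq_zero (show g ≤ j by omega) hg]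
    ring

/-- Coefficients of the target series. -/
def LL (g d : ℕ) : ℝ := (Nat.factorial (2*g-1+2*d) : ℝ) / (Nat.factorial d : ℝ)^2

lemma LL_rec (g : ℕ) (hg : 1 ≤ g) (d : ℕ) :
    ((d:ℝ)+1)^2 * LL g (d+1) = (2*(g:ℝ)+2*d) * (2*(g:ℝ)+2*d+1) * LL g d := by
  have h1 : 2*g-1+2*(d+1) = (2*g-1+2*d) + 1 + 1 := by omega
  unfold LL
  rw [h1, Nat.factorial_succ, Nat.factorial_succ, Nat.factorial_succ d]
  have hc : ((2*g-1+2*d : ℕ) : ℝ) = 2*(g:ℝ)+2*d - 1 := by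
    push_cast [Nat.cast_sub (show 1 ≤ 2*g by omega)]
    ring
  have B : (Nat.factorial (2*g-1+2*d) : ℝ) ≠ 0 := by
    exact_mod_cast (Nat.factorial_pos _).ne'
  have D : (Nat.factorial d : ℝ) ≠ 0 := by exact_mod_cast (Nat.factorial_pos d).ne'
  have E : ((d:ℝ)+1) ≠ 0 := by positivity
  push_cast [hc]
  field_simp
  ring

lemma conv_bb (m : ℕ) : ∀ n : ℕ,
    ∑ k ∈ range (n+1), bb m k * bb 0 (n-k) = 4^n * ((n+m).choose n : ℝ) := by
  intro n
  induction n with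
  | zero => simp [bb_zero]
  | succ n ih =>
    have hne : ((n:ℝ)+1) ≠ 0 := by positivity
    apply mul_left_cancel₀ hne
    have split : ∀ k ∈ range (n+2),
        ((n:ℝ)+1) * (bb m k * bb 0 (n+1-k)) =
          ((n+1-k : ℕ) : ℝ) * (bb m k * bb 0 (n+1-k))
            + (k : ℝ) * (bb m k * bb 0 (n+1-k)) := by
      intro k hk
      have hk' : k ≤ n+1 := by simpa [Nat.lt_succ_iff] using hk
      have : ((n+1-k : ℕ) : ℝ) = ((n:ℝ)+1) - k := by
        rw [Nat.cast_sub hk']; push_cast; ring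
      rw [this]; ring
    rw [Finset.mul_sum, Finset.sum_congr rfl split, Finset.sum_add_distrib]
    have hA : ∑ k ∈ range (n+2), ((n+1-k : ℕ) : ℝ) * (bb m k * bb 0 (n+1-k))
        = ∑ k ∈ range (n+1), (4*((n-k : ℕ):ℝ)+2) * (bb m k * bb 0 (n-k)) := by
      rw [Finset.sum_range_succ]
      simp only [Nat.sub_self, Nat.cast_zero, zero_mul, add_zero]
      apply Finset.sum_congr rfl
      intro k hk
      have hk' : k ≤ n := by simpa [Nat.lt_succ_iff] using hk
      have e1 : n+1-k = (n-k)+1 := by omega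
      rw [e1]
      have := bb_rec 0 (n-k)
      push_cast at this ⊢
      nlinarith [this, bb_pos m k]
    have hB : ∑ k ∈ range (n+2), (k : ℝ) * (bb m k * bb 0 (n+1-k))
        = ∑ k ∈ range (n+1), (4*(k:ℝ)+4*m+2) * (bb m k * bb 0 (n-k)) := by
      rw [Finset.sum_range_succ']
      simp only [Nat.cast_zero, zero_mul, add_zero]
      apply Finset.sum_congr rfl
      intro k hk
      have e1 : n+1-(k+1) = n-k := by omega
      rw [e1]
      have := bb_rec m k
      push_cast at this ⊢
      nlinarith [this, bb_pos 0 (n-k)]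
    rw [hA, hB, ← Finset.sum_add_distrib]
    have hsum : ∑ k ∈ range (n+1),
        ((4*((n-k : ℕ):ℝ)+2) * (bb m k * bb 0 (n-k)) + (4*(k:ℝ)+4*m+2) * (bb m k * bb 0 (n-k)))
        = (4*(n:ℝ)+4*m+4) * ∑ k ∈ range (n+1), bb m k * bb 0 (n-k) := by
      rw [Finset.mul_sum]
      apply Finset.sum_congr rfl
      intro k hk
      have hk' : k ≤ n := by simpa [Nat.lt_succ_iff] using hk
      have : ((n-k : ℕ) : ℝ) = (n:ℝ) - k := by rw [Nat.cast_sub hk']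
      rw [this]; ring
    rw [hsum, ih]
    have hchoose : (n+1) * ((n+1+m).choose (n+1)) = (n+m+1) * ((n+m).choose n) :=
      calc (n+1) * ((n+1+m).choose (n+1))
          = (n+m+1).choose (n+1) * (n+1) := by
            rw [mul_comm, show n+1+m = n+m+1 from by omega]
        _ = (n+m).succ * (n+m).choose n := (Nat.add_one_mul_choose_eq _ _).symm
        _ = (n+m+1) * ((n+m).choose n) := rfl
    have hchoose' : ((n:ℝ)+1) * (((n+1+m).choose (n+1) : ℕ) : ℝ)
        = ((n:ℝ)+(m:ℝ)+1) * (((n+m).choose n : ℕ) : ℝ) := by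
      exact_mod_cast congrArg (Nat.cast (R := ℝ)) hchoose
    calc (4*(n:ℝ)+4*m+4) * (4^n * ((n+m).choose n : ℝ))
        = 4^(n+1) * (((n:ℝ)+(m:ℝ)+1) * ((n+m).choose n : ℝ)) := by ring
      _ = 4^(n+1) * (((n:ℝ)+1) * ((n+1+m).choose (n+1) : ℝ)) := by rw [← hchoose']
      _ = ((n:ℝ)+1) * (4^(n+1) * ((n+1+m).choose (n+1) : ℝ)) := by ring

lemma conv_q (g : ℕ) (hg : 1 ≤ g) : ∀ d : ℕ,
    (Nat.factorial (2*g-1) : ℝ) * (∑ j ∈ range (d+1), qq g j * bb (2*g-1) (d-j))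
      = LL g d := by
  intro d
  have hMc : ((2*g-1 : ℕ) : ℝ) = 2*(g:ℝ) - 1 := by
    push_cast [Nat.cast_sub (show 1 ≤ 2*g by omega)]; ring
  induction d with
  | zero =>
    simp [qq_zero, bb_zero, LL]
  | succ d ih =>
    have hne : (((d:ℝ)+1)^2) ≠ 0 := by positivity
    apply mul_left_cancel₀ hne
    rw [show (((d:ℝ)+1)^2) * ((Nat.factorial (2*g-1) : ℝ) *
          (∑ j ∈ range (d+1+1), qq g j * bb (2*g-1) (d+1-j)))
        = (Nat.factorial (2*g-1) : ℝ) *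
          (∑ j ∈ range (d+2), ((d:ℝ)+1)^2 * (qq g j * bb (2*g-1) (d+1-j))) from by
      rw [← Finset.mul_sum]; ring]
    have split : ∀ j ∈ range (d+2),
        ((d:ℝ)+1)^2 * (qq g j * bb (2*g-1) (d+1-j)) =
          ((d+1-j : ℕ) : ℝ) * (((d:ℝ)+1) + j) * (qq g j * bb (2*g-1) (d+1-j))
            + (j : ℝ)^2 * (qq g j * bb (2*g-1) (d+1-j)) := by
      intro j hj
      have hj' : j ≤ d+1 := by simpa [Nat.lt_succ_iff] using hj
      have : ((d+1-j : ℕ) : ℝ) = ((d:ℝ)+1) - j := by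
        rw [Nat.cast_sub hj']; push_cast; ring
      rw [this]; ring
    rw [Finset.sum_congr rfl split, Finset.sum_add_distrib]
    have hA : ∑ j ∈ range (d+2), ((d+1-j : ℕ) : ℝ) * (((d:ℝ)+1) + j) * (qq g j * bb (2*g-1) (d+1-j))
        = ∑ j ∈ range (d+1),
            (((d:ℝ)+1) + j) * (4*((d-j : ℕ):ℝ) + 4*(2*(g:ℝ)-1) + 2) * (qq g j * bb (2*g-1) (d-j)) := by
      rw [Finset.sum_range_succ]
      simp only [Nat.sub_self, Nat.cast_zero, zero_mul, add_zero]
      apply Finset.sum_congr rfl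
      intro j hj
      have hj' : j ≤ d := by simpa [Nat.lt_succ_iff] using hj
      have e1 : d+1-j = (d-j)+1 := by omega
      rw [e1]
      have hrec := bb_rec (2*g-1) (d-j)
      rw [hMc] at hrec
      push_cast
      linear_combination ((d:ℝ)+1+(j:ℝ)) * qq g j * hrec
    have hB : ∑ j ∈ range (d+2), (j : ℝ)^2 * (qq g j * bb (2*g-1) (d+1-j))
        = ∑ j ∈ range (d+1),
            (2*(g:ℝ) - 1 - 2*j) * (2*(g:ℝ) - 2 - 2*j) * (qq g j * bb (2*g-1) (d-j)) := by
      rw [Finset.sum_range_succ']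
      simp only [Nat.cast_zero, ne_eq, OfNat.ofNat_ne_zero, not_false_eq_true, zero_pow, zero_mul,
        add_zero]
      apply Finset.sum_congr rfl
      intro j hj
      have e1 : d+1-(j+1) = d-j := by omega
      rw [e1]
      have hrec := qq_rec g hg j
      push_cast at hrec ⊢
      linear_combination bb (2*g-1) (d-j) * hrec
    rw [hA, hB, ← Finset.sum_add_distrib]
    have hsum : ∑ j ∈ range (d+1),
        ((((d:ℝ)+1) + j) * (4*((d-j : ℕ):ℝ) + 4*(2*(g:ℝ)-1) + 2) * (qq g j * bb (2*g-1) (d-j))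
          + (2*(g:ℝ) - 1 - 2*j) * (2*(g:ℝ) - 2 - 2*j) * (qq g j * bb (2*g-1) (d-j)))
        = ((2*(g:ℝ)+2*d) * (2*(g:ℝ)+2*d+1)) * ∑ j ∈ range (d+1), qq g j * bb (2*g-1) (d-j) := by
      rw [Finset.mul_sum]
      apply Finset.sum_congr rfl
      intro j hj
      have hj' : j ≤ d := by simpa [Nat.lt_succ_iff] using hj
      have : ((d-j : ℕ) : ℝ) = (d:ℝ) - j := by rw [Nat.cast_sub hj']
      rw [this]; ring
    rw [hsum]
    calc (Nat.factorial (2*g-1) : ℝ) *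
          ((2*(g:ℝ)+2*d) * (2*(g:ℝ)+2*d+1) * ∑ j ∈ range (d+1), qq g j * bb (2*g-1) (d-j))
        = (2*(g:ℝ)+2*d) * (2*(g:ℝ)+2*d+1) *
            ((Nat.factorial (2*g-1) : ℝ) * ∑ j ∈ range (d+1), qq g j * bb (2*g-1) (d-j)) := by
          ring
      _ = (2*(g:ℝ)+2*d) * (2*(g:ℝ)+2*d+1) * LL g d := by rw [ih]
      _ = ((d:ℝ)+1)^2 * LL g (d+1) := (LL_rec g hg d).symm

lemma summable_bb (m : ℕ) {t : ℝ} (ht : 0 < t) (h4 : 4 * t < 1) :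
    Summable (fun k => bb m k * t ^ k) := by
  apply summable_of_ratio_test_tendsto_lt_one h4
    (Filter.Eventually.of_forall fun n => (mul_pos (bb_pos m n) (pow_pos ht n)).ne')
  have hratio : ∀ k : ℕ, ‖bb m (k+1) * t^(k+1)‖ / ‖bb m k * t^k‖
      = (4 + (4*(m:ℝ)-2) * (1/((k:ℝ)+1))) * t := by
    intro k
    rw [Real.norm_of_nonneg (mul_pos (bb_pos m (k+1)) (pow_pos ht (k+1))).le,
      Real.norm_of_nonneg (mul_pos (bb_pos m k) (pow_pos ht k)).le]
    have h1 : ((k:ℝ)+1) ≠ 0 := by positivity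
    have hval : bb m (k+1) = (4*(k:ℝ)+4*(m:ℝ)+2)/((k:ℝ)+1) * bb m k := by
      rw [div_mul_eq_mul_div, eq_div_iff h1]
      linear_combination bb_rec m k
    rw [hval, pow_succ]
    have h2 : bb m k ≠ 0 := (bb_pos m k).ne'
    have h3 : t ^ k ≠ 0 := (pow_pos ht k).ne'
    field_simp
    ring
  have htend : Tendsto (fun k : ℕ => (4 + (4*(m:ℝ)-2) * (1/((k:ℝ)+1))) * t) atTop (𝓝 (4*t)) := by
    have h0 := tendsto_one_div_add_atTop_nhds_zero_nat (𝕜 := ℝ)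
    have h5 := ((h0.const_mul (4*(m:ℝ)-2)).const_add 4).mul_const t
    simpa using h5
  exact htend.congr (fun k => (hratio k).symm)

end OnePointAux

open OnePointAux

/-- The genus-`g` part of the one-point function of stationary GW invariants of ℙ¹:
`∑_{d=0}^∞ ((2g-1+2d)!/(d!)²)·t^d
  = (2g-1)!·(1-4t)^{-(4g-1)/2}·∑_{j=0}^{g-1} ((2g-1)!/((2g-1-2j)!(j!)²))·t^j`. -/
theorem one_point_genus_g (g : ℕ) (hg : 1 ≤ g) (t : ℝ) (h0 : 0 ≤ t) (h1 : t < 1 / 4) :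
    HasSum
      (fun d : ℕ =>
        ((Nat.factorial (2 * g - 1 + 2 * d) : ℝ) / ((Nat.factorial d : ℝ)) ^ 2) * t ^ d)
      ((Nat.factorial (2 * g - 1) : ℝ) * (1 - 4 * t) ^ (-((4 * (g : ℝ) - 1) / 2)) *
        ∑ j ∈ Finset.range g,
          ((Nat.factorial (2 * g - 1) : ℝ) /
              ((Nat.factorial (2 * g - 1 - 2 * j) : ℝ) * ((Nat.factorial j : ℝ)) ^ 2)) *
            t ^ j) := by
  have hMc : ((2*g-1 : ℕ) : ℝ) = 2*(g:ℝ) - 1 := by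
    push_cast [Nat.cast_sub (show 1 ≤ 2*g by omega)]; ring
  rcases h0.eq_or_lt with heq | ht
  · -- t = 0
    rw [← heq]
    have hfun : ∀ d : ℕ, d ≠ 0 →
        ((Nat.factorial (2*g-1+2*d) : ℝ) / ((Nat.factorial d : ℝ))^2) * (0:ℝ)^d = 0 := by
      intro d hd
      rw [zero_pow hd, mul_zero]
    have hs := hasSum_single (f := fun d : ℕ =>
      ((Nat.factorial (2*g-1+2*d) : ℝ) / ((Nat.factorial d : ℝ))^2) * (0:ℝ)^d) 0 hfun
    simp only [Nat.mul_zero, Nat.add_zero, Nat.factorial_zero, Nat.cast_one, pow_zero,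
      mul_one, one_pow, div_one] at hs
    convert hs using 1
    have hsum : ∑ j ∈ Finset.range g,
        ((Nat.factorial (2*g-1) : ℝ) /
          ((Nat.factorial (2*g-1-2*j) : ℝ) * ((Nat.factorial j : ℝ))^2)) * (0:ℝ)^j
        = 1 := by
      rw [Finset.sum_eq_single_of_mem 0 (Finset.mem_range.2 (by omega))
        (fun j _ hj => by rw [zero_pow hj, mul_zero])]
      have : (Nat.factorial (2*g-1) : ℝ) ≠ 0 := by
        exact_mod_cast (Nat.factorial_pos _).ne'
      simp [div_self this]
    rw [hsum]
    norm_num [Real.one_rpow]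
  · -- 0 < t
    have h4t : 4 * t < 1 := by linarith
    have hbpos : 0 < 1 - 4 * t := by linarith
    have sum0 : Summable (fun k => bb 0 k * t ^ k) := summable_bb 0 ht h4t
    have sumM : Summable (fun k => bb (2*g-1) k * t ^ k) := summable_bb (2*g-1) ht h4t
    have nonneg : ∀ m k, (0:ℝ) ≤ bb m k * t ^ k :=
      fun m k => (mul_pos (bb_pos m k) (pow_pos ht k)).le
    have n0 : Summable (fun k => ‖bb 0 k * t ^ k‖) := by
      simpa only [Real.norm_eq_abs] using sum0.abs
    have nM : Summable (fun k => ‖bb (2*g-1) k * t ^ k‖) := by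
      simpa only [Real.norm_eq_abs] using sumM.abs
    have inner : ∀ (m n : ℕ), ∑ k ∈ range (n+1), (bb m k * t^k) * (bb 0 (n-k) * t^(n-k))
        = (∑ k ∈ range (n+1), bb m k * bb 0 (n-k)) * t^n := by
      intro m n
      rw [Finset.sum_mul]
      apply Finset.sum_congr rfl
      intro k hk
      have hk' : k ≤ n := by simpa [Nat.lt_succ_iff] using hk
      have htk : t^k * t^(n-k) = t^n := by rw [← pow_add]; congr 1; omega
      calc (bb m k * t^k) * (bb 0 (n-k) * t^(n-k))
          = bb m k * bb 0 (n-k) * (t^k * t^(n-k)) := by ring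
        _ = bb m k * bb 0 (n-k) * t^n := by rw [htk]
    have hS0sq : (∑' k, bb 0 k * t ^ k) * (∑' k, bb 0 k * t ^ k) = (1 - 4*t)⁻¹ := by
      rw [tsum_mul_tsum_eq_tsum_sum_range_of_summable_norm n0 n0]
      have hin : ∀ n : ℕ, ∑ k ∈ range (n+1), (bb 0 k * t^k) * (bb 0 (n-k) * t^(n-k)) = (4*t)^n := by
        intro n
        rw [inner 0 n, conv_bb 0 n]
        simp [mul_pow]
      rw [tsum_congr hin, tsum_geometric_of_lt_one (by linarith) h4t]
    have hS0pos : 0 < ∑' k, bb 0 k * t ^ k :=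
      Summable.tsum_pos sum0 (fun k => nonneg 0 k) 0 (by simp [bb_zero])
    have hrp : 0 < (1-4*t) ^ (-(1/2) : ℝ) := Real.rpow_pos_of_pos hbpos _
    have hsq : ((1-4*t) ^ (-(1/2):ℝ))^2 = (1-4*t)⁻¹ := by
      rw [← Real.rpow_natCast ((1-4*t) ^ (-(1/2):ℝ)) 2, ← Real.rpow_mul hbpos.le]
      norm_num [Real.rpow_neg_one]
    have hS0 : (∑' k, bb 0 k * t ^ k) = (1-4*t) ^ (-(1/2) : ℝ) := by
      have h2 : (∑' k, bb 0 k * t ^ k)^2 = ((1-4*t) ^ (-(1/2):ℝ))^2 := by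
        rw [hsq, ← hS0sq]; ring
      rw [← Real.sqrt_sq hS0pos.le, h2, Real.sqrt_sq hrp.le]
    have hMS0 : (∑' k, bb (2*g-1) k * t ^ k) * (∑' k, bb 0 k * t ^ k)
        = 1/(1-4*t)^(2*g-1+1) := by
      rw [tsum_mul_tsum_eq_tsum_sum_range_of_summable_norm nM n0]
      have hin : ∀ n : ℕ, ∑ k ∈ range (n+1), (bb (2*g-1) k * t^k) * (bb 0 (n-k) * t^(n-k))
          = ((n+(2*g-1)).choose (2*g-1) : ℝ) * (4*t)^n := by
        intro n
        rw [inner (2*g-1) n, conv_bb (2*g-1) n]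
        have hcs : (n+(2*g-1)).choose n = (n+(2*g-1)).choose (2*g-1) := by
          have h := Nat.choose_symm (Nat.le_add_right n (2*g-1))
          rw [show n+(2*g-1) - n = 2*g-1 from by omega] at h
          exact h.symm
        rw [hcs, mul_pow]; ring
      rw [tsum_congr hin]
      exact (hasSum_choose_mul_geometric_of_norm_lt_one (2*g-1) (r := 4*t)
        (by rw [Real.norm_eq_abs, abs_of_nonneg (by linarith)]; exact h4t)).tsum_eq
    have hSM : (∑' k, bb (2*g-1) k * t ^ k) = (1-4*t) ^ (-((4*(g:ℝ)-1)/2)) := by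
      have hS0ne : (∑' k, bb 0 k * t ^ k) ≠ 0 := hS0pos.ne'
      have hstep : (∑' k, bb (2*g-1) k * t ^ k)
          = (1/(1-4*t)^(2*g-1+1)) / (∑' k, bb 0 k * t ^ k) := by
        rw [eq_div_iff hS0ne]; exact hMS0
      have cast1 : ((2*g-1+1 : ℕ) : ℝ) = 2*(g:ℝ) := by
        push_cast [hMc]; ring
      rw [hstep, hS0]
      rw [show (1:ℝ)/(1-4*t)^(2*g-1+1) = (1-4*t) ^ (-(((2*g-1+1 : ℕ)):ℝ)) from by
        rw [Real.rpow_neg hbpos.le, Real.rpow_natCast, one_div]]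
      rw [div_eq_mul_inv, ← Real.rpow_neg hbpos.le, ← Real.rpow_add hbpos]
      rw [cast1]
      congr 1
      ring
    -- polynomial part
    have hq0 : ∀ j ∉ range g, qq g j * t ^ j = 0 := by
      intro j hj
      have : g ≤ j := by simpa [Finset.mem_range, not_lt] using hj
      rw [qq_eq_zero this hg, zero_mul]
    have nq : Summable (fun j => ‖qq g j * t ^ j‖) :=
      summable_of_ne_finset_zero (s := range g) (fun j hj => by rw [hq0 j hj, norm_zero])
    have main := hasSum_sum_range_mul_of_summable_norm (f := fun j => qq g j * t^j)
      (g := fun k => bb (2*g-1) k * t^k) nq nM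
    have main2 := main.mul_left ((Nat.factorial (2*g-1) : ℝ))
    have hfun : (fun n => (Nat.factorial (2*g-1) : ℝ) *
          ∑ k ∈ range (n+1), (qq g k * t^k) * (bb (2*g-1) (n-k) * t^(n-k)))
        = fun d => ((Nat.factorial (2*g-1+2*d) : ℝ) / ((Nat.factorial d : ℝ))^2) * t^d := by
      funext n
      have e : ∑ k ∈ range (n+1), (qq g k * t^k) * (bb (2*g-1) (n-k) * t^(n-k))
          = (∑ k ∈ range (n+1), qq g k * bb (2*g-1) (n-k)) * t^n := by
        rw [Finset.sum_mul]
        apply Finset.sum_congr rfl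
        intro k hk
        have hk' : k ≤ n := by simpa [Nat.lt_succ_iff] using hk
        have htk : t^k * t^(n-k) = t^n := by rw [← pow_add]; congr 1; omega
        calc (qq g k * t^k) * (bb (2*g-1) (n-k) * t^(n-k))
            = qq g k * bb (2*g-1) (n-k) * (t^k * t^(n-k)) := by ring
          _ = qq g k * bb (2*g-1) (n-k) * t^n := by rw [htk]
      rw [e, ← mul_assoc, conv_q g hg n]
      rfl
    have hcoeff : ∀ j ∈ range g, qq g j * t^j =
        ((Nat.factorial (2*g-1) : ℝ) /
          ((Nat.factorial (2*g-1-2*j) : ℝ) * ((Nat.factorial j : ℝ))^2)) * t^j := by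
      intro j hj
      have hj' : j < g := Finset.mem_range.1 hj
      have h2j : 2*j ≤ 2*g-1 := by omega
      have hfd := Nat.factorial_mul_descFactorial h2j
      have fne : (Nat.factorial (2*g-1-2*j) : ℝ) ≠ 0 := by
        exact_mod_cast (Nat.factorial_pos _).ne'
      have hdesc : ((2*g-1).descFactorial (2*j) : ℝ)
          = (Nat.factorial (2*g-1) : ℝ) / (Nat.factorial (2*g-1-2*j) : ℝ) := by
        rw [eq_div_iff fne]
        exact_mod_cast (mul_comm ((2*g-1-2*j).factorial) ((2*g-1).descFactorial (2*j)) ▸ hfd)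
      unfold qq
      rw [hdesc, div_div]
    have hval : (Nat.factorial (2*g-1) : ℝ) *
          ((∑' j, qq g j * t^j) * (∑' k, bb (2*g-1) k * t^k))
        = (Nat.factorial (2*g-1) : ℝ) * (1-4*t) ^ (-((4*(g:ℝ)-1)/2)) *
            (∑ j ∈ range g, ((Nat.factorial (2*g-1) : ℝ) /
              ((Nat.factorial (2*g-1-2*j) : ℝ) * ((Nat.factorial j : ℝ))^2)) * t^j) := by
      rw [tsum_eq_sum hq0, hSM, Finset.sum_congr rfl hcoeff]
      ring
    rw [hfun, hval] at main2
    exact main2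
end
end
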